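/- A loop satisfying the identity x·((x·y)·z) = (x·(x·y))·z (identity A24) is a group, i.e., it satisfies the associative law x·(y·z)=(x·y)·z for all x,y,z. -/
import Mathlib


/-- A loop: a set with multiplication, left division `ldiv` (written `\`),
right division `rdiv` (written `/`), and a two-sided identity `e`. -/
structure Loop (α : Type) where
  mul : α → α → α
  ldiv : α → α → α
  rdiv : α → α → α
  e : α
  mul_ldiv : ∀ a b, mul a (ldiv a b) = b
  rdiv_mul : ∀ a b, mul (rdiv b a) a = b
  ldiv_mul : ∀ a b, ldiv a (mul a b) = b
  mul_rdiv : ∀ a b, rdiv (mul b a) a = b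
  e_mul : ∀ a, mul e a = a
  mul_e : ∀ a, mul a e = a

theorem stmt_2 (α : Type) (L : Loop α) (h : ∀ x y z : α, L.mul x (L.mul (L.mul x y) z) = L.mul (L.mul x (L.mul x y)) z) :
    ∀ x y z : α, L.mul x (L.mul y z) = L.mul (L.mul x y) z := by
  intro x y z
  have := h x (L.ldiv x y) z
  rwa [L.mul_ldiv] at this
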